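/- Let A = FᵀF be an n×n real symmetric positive semidefinite matrix (F an m×n real matrix), B an n×n real symmetric positive definite matrix, x ∈ ℝⁿ with Ax ≠ 0, and ρ ≥ 1. Let v ∈ ℝᵐ satisfy vᵀFx = 0, vᵀv = 1/ρ, and σ := 1 − (vᵀFB⁻¹Fᵀv)/(2(xᵀAx)^{1/2}) > 0. Let g = 2Bx − Ax/(xᵀAx)^{1/2}, H = 2B − (1/(xᵀAx)^{1/2})·(Fᵀv)(Fᵀv)ᵀ, q = FB⁻¹Ax, D = qqᵀ, and C = ρI − FB⁻¹Fᵀ/(2(xᵀAx)^{1/2}). Then vᵀCv = σ > 0 and gᵀH⁻¹g = ½·gᵀB⁻¹g + (1/(4(xᵀAx)^{3/2}))·(vᵀDv)/(vᵀCv); consequently, over the constraint set Ω = {v : vᵀFx = 0, vᵀv = 1/ρ}, maximizing the surrogate decrease gᵀH⁻¹g is equivalent to maximizing the generalized Rayleigh quotient (vᵀDv)/(vᵀCv). -/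

import Mathlib

open Matrix

private lemma vmv_mulVec {m n : Type*} [Fintype m] [Fintype n] (a : m → ℝ) (b w : n → ℝ) :
    vecMulVec a b *ᵥ w = (b ⬝ᵥ w) • a := by
  ext i
  simp only [vecMulVec_apply, mulVec, dotProduct, Pi.smul_apply, smul_eq_mul, Finset.sum_mul,
    Finset.mul_sum]
  exact Finset.sum_congr rfl fun j _ => by ring

private lemma mul_vmv {m n k : Type*} [Fintype m] [Fintype n] [Fintype k]
    (M : Matrix m n ℝ) (a : n → ℝ) (b : k → ℝ) :
    M * vecMulVec a b = vecMulVec (M *ᵥ a) b := by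
  ext i j
  simp [vecMulVec_apply, mul_apply, mulVec, dotProduct, Finset.sum_mul, mul_assoc]

private lemma vmv_mul {m n k : Type*} [Fintype m] [Fintype n] [Fintype k]
    (M : Matrix n k ℝ) (a : m → ℝ) (b : n → ℝ) :
    vecMulVec a b * M = vecMulVec a (b ᵥ* M) := by
  ext i j
  simp [vecMulVec_apply, mul_apply, vecMul, dotProduct, Finset.mul_sum, mul_assoc]

private lemma vmv_mul_vmv {m n k : Type*} [Fintype m] [Fintype n] [Fintype k]
    (a : m → ℝ) (b c : n → ℝ) (d : k → ℝ) :
    vecMulVec a b * vecMulVec c d = (b ⬝ᵥ c) • vecMulVec a d := by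
  ext i j
  simp only [vecMulVec_apply, mul_apply, Matrix.smul_apply, dotProduct, smul_eq_mul, Finset.sum_mul]
  exact Finset.sum_congr rfl fun l _ => by ring

private lemma dot_vmv {m n : Type*} [Fintype m] [Fintype n] (u : m → ℝ) (a : m → ℝ)
    (b w : n → ℝ) : u ⬝ᵥ vecMulVec a b *ᵥ w = (u ⬝ᵥ a) * (b ⬝ᵥ w) := by
  rw [vmv_mulVec, dotProduct_smul, smul_eq_mul, mul_comm]

/-- Selecting the optimal `v` reduces to a new generalized eigenvalue problem: under the
constraints `vᵀFx = 0`, `vᵀv = 1/ρ`, `σ > 0`, one has `vᵀCv = σ` and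
`gᵀH⁻¹g = ½gᵀB⁻¹g + (vᵀDv)/(vᵀCv)/(4(xᵀAx)^{3/2})`; consequently maximizing the surrogate
decrease `gᵀH⁻¹g` over the constraint set is equivalent to maximizing the generalized
Rayleigh quotient `(vᵀDv)/(vᵀCv)`. -/
theorem stmt_17 {n m : ℕ} (A B : Matrix (Fin n) (Fin n) ℝ)
    (F : Matrix (Fin m) (Fin n) ℝ)
    (hA : A.PosSemidef) (hAF : A = Fᵀ * F) (hB : B.PosDef)
    (x : Fin n → ℝ) (hx : A *ᵥ x ≠ 0) (ρ : ℝ) (hρ : 1 ≤ ρ)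
    (g : Fin n → ℝ)
    (hg : g = (2 : ℝ) • (B *ᵥ x) - (Real.sqrt (x ⬝ᵥ A *ᵥ x))⁻¹ • (A *ᵥ x))
    (q : Fin m → ℝ) (hq : q = F *ᵥ (B⁻¹ *ᵥ (A *ᵥ x)))
    (D C : Matrix (Fin m) (Fin m) ℝ) (hD : D = vecMulVec q q)
    (hC : C = ρ • (1 : Matrix (Fin m) (Fin m) ℝ)
      - (2 * Real.sqrt (x ⬝ᵥ A *ᵥ x))⁻¹ • (F * B⁻¹ * Fᵀ))
    (v : Fin m → ℝ) (hvFx : v ⬝ᵥ (F *ᵥ x) = 0) (hvv : v ⬝ᵥ v = 1 / ρ)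
    (σ : ℝ)
    (hσdef : σ = 1 - (v ⬝ᵥ (F * B⁻¹ * Fᵀ) *ᵥ v) / (2 * Real.sqrt (x ⬝ᵥ A *ᵥ x)))
    (hσ : 0 < σ) :
    v ⬝ᵥ C *ᵥ v = σ ∧
    g ⬝ᵥ ((2 : ℝ) • B - (Real.sqrt (x ⬝ᵥ A *ᵥ x))⁻¹ •
        vecMulVec (Fᵀ *ᵥ v) (Fᵀ *ᵥ v))⁻¹ *ᵥ g =
      (1 / 2 : ℝ) * (g ⬝ᵥ B⁻¹ *ᵥ g)
        + (4 * (Real.sqrt (x ⬝ᵥ A *ᵥ x)) ^ 3)⁻¹ * ((v ⬝ᵥ D *ᵥ v) / (v ⬝ᵥ C *ᵥ v)) ∧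
    ∀ v₁ v₂ : Fin m → ℝ,
      (v₁ ⬝ᵥ (F *ᵥ x) = 0 ∧ v₁ ⬝ᵥ v₁ = 1 / ρ ∧
        0 < 1 - (v₁ ⬝ᵥ (F * B⁻¹ * Fᵀ) *ᵥ v₁) / (2 * Real.sqrt (x ⬝ᵥ A *ᵥ x))) →
      (v₂ ⬝ᵥ (F *ᵥ x) = 0 ∧ v₂ ⬝ᵥ v₂ = 1 / ρ ∧
        0 < 1 - (v₂ ⬝ᵥ (F * B⁻¹ * Fᵀ) *ᵥ v₂) / (2 * Real.sqrt (x ⬝ᵥ A *ᵥ x))) →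
      (g ⬝ᵥ ((2 : ℝ) • B - (Real.sqrt (x ⬝ᵥ A *ᵥ x))⁻¹ •
            vecMulVec (Fᵀ *ᵥ v₁) (Fᵀ *ᵥ v₁))⁻¹ *ᵥ g ≤
        g ⬝ᵥ ((2 : ℝ) • B - (Real.sqrt (x ⬝ᵥ A *ᵥ x))⁻¹ •
            vecMulVec (Fᵀ *ᵥ v₂) (Fᵀ *ᵥ v₂))⁻¹ *ᵥ g ↔
        (v₁ ⬝ᵥ D *ᵥ v₁) / (v₁ ⬝ᵥ C *ᵥ v₁) ≤ (v₂ ⬝ᵥ D *ᵥ v₂) / (v₂ ⬝ᵥ C *ᵥ v₂)) := by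
  set s : ℝ := Real.sqrt (x ⬝ᵥ A *ᵥ x) with hs_def
  have hρ0 : (ρ : ℝ) ≠ 0 := by positivity
  -- positivity of xᵀAx
  have hFx : F *ᵥ x ≠ 0 := by
    intro h
    apply hx
    rw [hAF, ← mulVec_mulVec, h, mulVec_zero]
  have hxAx : 0 < x ⬝ᵥ A *ᵥ x := by
    have : x ⬝ᵥ A *ᵥ x = (F *ᵥ x) ⬝ᵥ (F *ᵥ x) := by
      rw [hAF, ← mulVec_mulVec, dotProduct_mulVec, ← mulVec_transpose, transpose_transpose]
    rw [this]
    have hnn : 0 ≤ (F *ᵥ x) ⬝ᵥ (F *ᵥ x) := Finset.sum_nonneg fun i _ => mul_self_nonneg _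
    rcases lt_or_eq_of_le hnn with h | h
    · exact h
    · exact absurd (dotProduct_self_eq_zero.mp h.symm) hFx
  have hs : 0 < s := Real.sqrt_pos.mpr hxAx
  -- B facts
  have hBdet : IsUnit B.det := hB.det_pos.ne'.isUnit
  have hBB : B * B⁻¹ = 1 := Matrix.mul_nonsing_inv B hBdet
  have hBsym : Bᵀ = B := by
    have := hB.1.eq
    rwa [conjTranspose_eq_transpose_of_trivial] at this
  have hBiT : B⁻¹ᵀ = B⁻¹ := by rw [Matrix.transpose_nonsing_inv, hBsym]
  -- the key computation, for any admissible w
  have key : ∀ (w : Fin m → ℝ), w ⬝ᵥ (F *ᵥ x) = 0 →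
      0 < 1 - (w ⬝ᵥ (F * B⁻¹ * Fᵀ) *ᵥ w) / (2 * s) →
      g ⬝ᵥ ((2 : ℝ) • B - s⁻¹ • vecMulVec (Fᵀ *ᵥ w) (Fᵀ *ᵥ w))⁻¹ *ᵥ g =
        (1 / 2 : ℝ) * (g ⬝ᵥ B⁻¹ *ᵥ g)
          + (4 * s ^ 3)⁻¹ *
            ((q ⬝ᵥ w) ^ 2 / (1 - (w ⬝ᵥ (F * B⁻¹ * Fᵀ) *ᵥ w) / (2 * s))) := by
    intro w hwFx hτpos
    set c : ℝ := w ⬝ᵥ (F * B⁻¹ * Fᵀ) *ᵥ w with hc_def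
    set τ : ℝ := 1 - c / (2 * s) with hτ_def
    have hτ0 : τ ≠ 0 := ne_of_gt hτpos
    have hcval : c = 2 * s * (1 - τ) := by
      rw [hτ_def]; field_simp; ring
    set p : Fin n → ℝ := Fᵀ *ᵥ w with hp_def
    set u : Fin n → ℝ := B⁻¹ *ᵥ p with hu_def
    have hBu : B *ᵥ u = p := by
      rw [hu_def, mulVec_mulVec, hBB, one_mulVec]
    have hpBi : p ᵥ* B⁻¹ = u := by
      rw [← hBiT, vecMul_transpose]
    have hpu : p ⬝ᵥ u = c := by
      have h : w ⬝ᵥ (F * B⁻¹ * Fᵀ) *ᵥ w = p ⬝ᵥ u := by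
        rw [hu_def, hp_def, ← mulVec_mulVec, ← mulVec_mulVec, dotProduct_mulVec w F,
          ← mulVec_transpose]
      rw [hc_def, h]
    -- candidate inverse
    set K : Matrix (Fin n) (Fin n) ℝ :=
      (1 / 2 : ℝ) • B⁻¹ + (4 * τ * s)⁻¹ • vecMulVec u u with hK_def
    have hHK : ((2 : ℝ) • B - s⁻¹ • vecMulVec p p) * K = 1 := by
      have expand : ((2 : ℝ) • B - s⁻¹ • vecMulVec p p) * K =
          (B * B⁻¹) +
            (2 * (4 * τ * s)⁻¹ - s⁻¹ * (1 / 2) - s⁻¹ * ((4 * τ * s)⁻¹ * c)) •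
              vecMulVec p u := by
        rw [hK_def]
        simp only [sub_mul, mul_add, Matrix.smul_mul, Matrix.mul_smul]
        rw [mul_vmv, hBu, vmv_mul, hpBi, vmv_mul_vmv, hpu]
        module
      have hco : 2 * (4 * τ * s)⁻¹ - s⁻¹ * (1 / 2) - s⁻¹ * ((4 * τ * s)⁻¹ * c) = 0 := by
        rw [hcval]; field_simp; ring
      rw [expand, hco, zero_smul, add_zero, hBB]
    have hinv : ((2 : ℝ) • B - s⁻¹ • vecMulVec p p)⁻¹ = K := inv_eq_right_inv hHK
    -- dot products
    have hgu : g ⬝ᵥ u = -(s⁻¹ * (q ⬝ᵥ w)) := by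
      have h1 : (B *ᵥ x) ⬝ᵥ u = 0 := by
        rw [hu_def, dotProduct_mulVec, ← hBiT, vecMul_transpose, mulVec_mulVec,
          Matrix.nonsing_inv_mul B hBdet, one_mulVec, hp_def, dotProduct_mulVec,
          ← mulVec_transpose, transpose_transpose, ← hwFx, dotProduct_comm]
      have h2 : (A *ᵥ x) ⬝ᵥ u = q ⬝ᵥ w := by
        rw [hu_def, dotProduct_mulVec, ← hBiT, vecMul_transpose, hp_def,
          dotProduct_mulVec, vecMul_transpose, hq]
      rw [hg, sub_dotProduct, smul_dotProduct, smul_dotProduct, h1, h2]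
      simp only [smul_eq_mul, smul_zero, mul_zero]
      ring
    rw [hinv, hK_def, add_mulVec, smul_mulVec, smul_mulVec, vmv_mulVec,
      dotProduct_add, dotProduct_smul, dotProduct_smul, dotProduct_smul,
      dotProduct_comm u g, hgu]
    have hs0 : s ≠ 0 := ne_of_gt hs
    simp only [smul_eq_mul]
    field_simp
  -- part 1
  have part1 : ∀ (w : Fin m → ℝ), w ⬝ᵥ w = 1 / ρ →
      w ⬝ᵥ C *ᵥ w = 1 - (w ⬝ᵥ (F * B⁻¹ * Fᵀ) *ᵥ w) / (2 * s) := by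
    intro w hww
    rw [hC, sub_mulVec, smul_mulVec, smul_mulVec, one_mulVec,
      dotProduct_sub, dotProduct_smul, dotProduct_smul, hww]
    simp only [smul_eq_mul]
    field_simp
  have hDq : ∀ (w : Fin m → ℝ), w ⬝ᵥ D *ᵥ w = (q ⬝ᵥ w) ^ 2 := by
    intro w
    rw [hD, dot_vmv, dotProduct_comm]
    ring
  have p1 : v ⬝ᵥ C *ᵥ v = σ := by rw [part1 v hvv, hσdef]
  refine ⟨p1, ?_, ?_⟩
  · rw [key v hvFx (by rw [← hσdef]; exact hσ), p1, hDq v, hσdef]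
  · intro v₁ v₂ ⟨h1a, h1b, h1c⟩ ⟨h2a, h2b, h2c⟩
    rw [key v₁ h1a h1c, key v₂ h2a h2c, part1 v₁ h1b, part1 v₂ h2b, hDq v₁, hDq v₂]
    have h4s : (0 : ℝ) < (4 * s ^ 3)⁻¹ := by positivity
    rw [add_le_add_iff_left]
    exact mul_le_mul_iff_right₀ h4s
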